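/- For every real ε with 0 < ε < 1 and all integers m ≥ 2 and n ≥ 1, setting d = ⌈(log₂ m)/ε⌉ and s = ⌈100·n·(log₂ m)/ε²⌉, more than half of all functions f : Fin m → Fin d → Fin s are (m,s,d,n,ε)-expanders; that is, the number of f such that every A ⊆ Fin m with |A| ≤ n satisfies |Γ(A)| ≥ (1−ε)·d·|A| exceeds s^{m·d}/2. -/

import Mathlib

/-- `nbr f v` : the set of right-neighbors of a left vertex `v` in the
left-`d`-regular bipartite multigraph encoded by `f`. -/
def nbr {m d s : ℕ} (f : Fin m → Fin d → Fin s) (v : Fin m) : Finset (Fin s) :=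
  Finset.image (f v) Finset.univ

/-- `nbrs f A` : the set of right-neighbors of a set `A` of left vertices. -/
def nbrs {m d s : ℕ} (f : Fin m → Fin d → Fin s) (A : Finset (Fin m)) : Finset (Fin s) :=
  A.biUnion (nbr f)

/-- `f` is an `(m,s,d,k,δ)`-expander: every `A` with `|A| ≤ k` has
at least `(1-δ)·d·|A|` neighbors. -/
def IsExpander {m d s : ℕ} (f : Fin m → Fin d → Fin s) (k : ℕ) (δ : ℝ) : Prop :=
  ∀ A : Finset (Fin m), A.card ≤ k → (1 - δ) * d * A.card ≤ ((nbrs f A).card : ℝ)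

open Finset

section key

variable {M s : ℕ}

/-- `p` is a novel position of `g` within `S`. -/
def nov (g : Fin M → Fin s) (S : Finset (Fin M)) (p : Fin M) : Prop :=
  ∀ q ∈ S, q < p → g q ≠ g p

instance (g : Fin M → Fin s) (S : Finset (Fin M)) (p : Fin M) : Decidable (nov g S p) := by
  unfold nov; infer_instance

lemma exists_of_not_nov {g : Fin M → Fin s} {S : Finset (Fin M)} {p : Fin M}
    (h : ¬ nov g S p) : ∃ q, q ∈ S ∧ q < p ∧ g q = g p := by
  unfold nov at h
  push_neg at h
  obtain ⟨q, hq1, hq2, hq3⟩ := h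
  exact ⟨q, hq1, hq2, hq3⟩

lemma card_image_eq_card_nov (g : Fin M → Fin s) (S : Finset (Fin M)) :
    (S.image g).card = (S.filter (fun p => nov g S p)).card := by
  classical
  have h1 : S.image g = (S.filter (fun p => nov g S p)).image g := by
    apply le_antisymm
    · intro y hy
      rw [mem_image] at hy
      obtain ⟨p, hp, hgp⟩ := hy
      have hne : (S.filter (fun q => g q = y)).Nonempty :=
        ⟨p, mem_filter.2 ⟨hp, hgp⟩⟩
      set p0 := (S.filter (fun q => g q = y)).min' hne with hp0
      have hp0mem := (S.filter (fun q => g q = y)).min'_mem hne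
      rw [mem_filter] at hp0mem
      refine mem_image.2 ⟨p0, mem_filter.2 ⟨hp0mem.1, ?_⟩, hp0mem.2⟩
      intro q hq hqlt hgq
      have : p0 ≤ q := min'_le _ _ (mem_filter.2 ⟨hq, by rw [hgq, hp0mem.2]⟩)
      exact absurd hqlt (not_lt.2 this)
    · exact image_subset_image (filter_subset _ _)
  rw [h1]
  apply card_image_of_injOn
  intro p hp q hq hpq
  simp only [coe_filter, Set.mem_setOf_eq] at hp hq
  rcases lt_trichotomy p q with h | h | h
  · exact absurd hpq (hq.2 p hp.1 h)
  · exact h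
  · exact absurd hpq.symm (hp.2 q hq.1 h)

noncomputable def Rset (g : Fin M → Fin s) (S : Finset (Fin M)) (r : ℕ) : Finset (Fin M) :=
  if h : r ≤ (S.filter (fun p => ¬ nov g S p)).card then
    (Finset.exists_subset_card_eq h).choose else ∅

lemma Rset_spec {g : Fin M → Fin s} {S : Finset (Fin M)} {r : ℕ}
    (h : r ≤ (S.filter (fun p => ¬ nov g S p)).card) :
    Rset g S r ⊆ S.filter (fun p => ¬ nov g S p) ∧ (Rset g S r).card = r := by
  rw [Rset, dif_pos h]
  exact ⟨(Finset.exists_subset_card_eq h).choose_spec.1,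
    (Finset.exists_subset_card_eq h).choose_spec.2⟩

noncomputable def emap (g : Fin M → Fin s) (S : Finset (Fin M)) (r : ℕ) (p : Fin M) : Fin M :=
  if h : ∃ q, q ∈ S ∧ q < p ∧ g q = g p then
    (if p ∈ Rset g S r then h.choose else p) else p

noncomputable def hmap (z0 : Fin s) (g : Fin M → Fin s) (S : Finset (Fin M)) (r : ℕ)
    (p : Fin M) : Fin s :=
  if p ∈ Rset g S r then z0 else g p

lemma emap_of_not_mem {g : Fin M → Fin s} {S : Finset (Fin M)} {r : ℕ} {p : Fin M}
    (h : p ∉ Rset g S r) : emap g S r p = p := by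
  unfold emap
  split_ifs <;> rfl

lemma emap_spec {g : Fin M → Fin s} {S : Finset (Fin M)} {r : ℕ} {p : Fin M}
    (hr : r ≤ (S.filter (fun p => ¬ nov g S p)).card)
    (h : p ∈ Rset g S r) :
    emap g S r p ∈ S ∧ emap g S r p < p ∧ g (emap g S r p) = g p := by
  have hmem := (Rset_spec hr).1 h
  rw [mem_filter] at hmem
  have hex : ∃ q, q ∈ S ∧ q < p ∧ g q = g p := exists_of_not_nov hmem.2
  rw [emap, dif_pos hex, if_pos h]
  exact hex.choose_spec

lemma recon {g g' : Fin M → Fin s} {S : Finset (Fin M)} {r : ℕ} {z0 : Fin s}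
    (hg : r ≤ (S.filter (fun p => ¬ nov g S p)).card)
    (hg' : r ≤ (S.filter (fun p => ¬ nov g' S p)).card)
    (hR : Rset g S r = Rset g' S r)
    (he : emap g S r = emap g' S r)
    (hh : hmap z0 g S r = hmap z0 g' S r) : g = g' := by
  have H : ∀ k : ℕ, ∀ p : Fin M, (p : ℕ) < k → g p = g' p := by
    intro k
    induction k with
    | zero => intro p hp; omega
    | succ k ih =>
      intro p hp
      by_cases hmem : p ∈ Rset g S r
      · have hmem' : p ∈ Rset g' S r := hR ▸ hmem
        obtain ⟨h1, h2, h3⟩ := emap_spec hg hmem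
        obtain ⟨h1', h2', h3'⟩ := emap_spec hg' hmem'
        have heq : emap g S r p = emap g' S r p := by rw [he]
        have hlt : ((emap g S r p : ℕ)) < k := by
          have := h2
          omega
        calc g p = g (emap g S r p) := h3.symm
          _ = g' (emap g S r p) := ih _ hlt
          _ = g' (emap g' S r p) := by rw [heq]
          _ = g' p := h3'
      · have hmem' : p ∉ Rset g' S r := hR ▸ hmem
        have := congrFun hh p
        rw [hmap, hmap, if_neg hmem, if_neg hmem'] at this
        exact this
  funext p
  exact H ((p : ℕ) + 1) p (Nat.lt_succ_self _)

lemma key_count (hs : 0 < s) (S : Finset (Fin M)) (r : ℕ) (hr : r ≤ S.card) :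
    ((univ : Finset (Fin M → Fin s)).filter
        (fun g => (S.image g).card ≤ S.card - r)).card
      ≤ S.card.choose r * (S.card ^ r * s ^ (M - r)) := by
  classical
  set z0 : Fin s := ⟨0, hs⟩ with hz0
  set T : Finset (Σ _ : Finset (Fin M), (Fin M → Fin M) × (Fin M → Fin s)) :=
    (S.powersetCard r).sigma (fun R =>
      (Fintype.piFinset (fun p => if p ∈ R then S else {p})) ×ˢ
      (Fintype.piFinset (fun p => if p ∈ R then ({z0} : Finset (Fin s)) else univ))) with hT
  have hTcard : T.card = S.card.choose r * (S.card ^ r * s ^ (M - r)) := by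
    rw [hT, Finset.card_sigma]
    have : ∀ R ∈ S.powersetCard r,
        ((Fintype.piFinset (fun p => if p ∈ R then S else {p})) ×ˢ
        (Fintype.piFinset (fun p => if p ∈ R then ({z0} : Finset (Fin s)) else univ))).card
        = S.card ^ r * s ^ (M - r) := by
      intro R hR
      rw [Finset.mem_powersetCard] at hR
      rw [Finset.card_product, Fintype.card_piFinset, Fintype.card_piFinset]
      rw [← Finset.prod_mul_prod_compl R, ← Finset.prod_mul_prod_compl R]
      have e1 : ∏ p ∈ R, (if p ∈ R then S else {p}).card = S.card ^ r := by
        rw [Finset.prod_congr rfl (fun p hp => by rw [if_pos hp]), Finset.prod_const,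
          hR.2]
      have e2 : ∏ p ∈ Rᶜ, (if p ∈ R then S else {p}).card = 1 := by
        rw [Finset.prod_congr rfl (fun p hp => by
          rw [if_neg (Finset.mem_compl.1 hp), Finset.card_singleton])]
        exact Finset.prod_const_one
      have e3 : ∏ p ∈ R, (if p ∈ R then ({z0} : Finset (Fin s)) else univ).card = 1 := by
        rw [Finset.prod_congr rfl (fun p hp => by rw [if_pos hp, Finset.card_singleton])]
        exact Finset.prod_const_one
      have e4 : ∏ p ∈ Rᶜ, (if p ∈ R then ({z0} : Finset (Fin s)) else univ).card
          = s ^ (M - r) := by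
        rw [Finset.prod_congr rfl (fun p hp => by
          rw [if_neg (Finset.mem_compl.1 hp), Finset.card_univ, Fintype.card_fin])]
        rw [Finset.prod_const, Finset.card_compl, Fintype.card_fin, hR.2]
      rw [e1, e2, e3, e4]
      ring
    rw [Finset.sum_congr rfl this, Finset.sum_const, Finset.card_powersetCard, smul_eq_mul]
  rw [← hTcard]
  apply Finset.card_le_card_of_injOn (fun g => ⟨Rset g S r, (emap g S r, hmap z0 g S r)⟩)
  · intro g hg
    rw [Finset.mem_coe, Finset.mem_filter] at hg
    have hnn : r ≤ (S.filter (fun p => ¬ nov g S p)).card := by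
      have hsplit := Finset.card_filter_add_card_filter_not
        (s := S) (p := fun p => nov g S p)
      have himg := card_image_eq_card_nov g S
      omega
    obtain ⟨hsub, hcard⟩ := Rset_spec hnn
    rw [Finset.mem_coe, hT, Finset.mem_sigma]
    constructor
    · rw [Finset.mem_powersetCard]
      exact ⟨hsub.trans (Finset.filter_subset _ _), hcard⟩
    · rw [Finset.mem_product]
      constructor
      · rw [Fintype.mem_piFinset]
        intro p
        show emap g S r p ∈ _
        by_cases hp : p ∈ Rset g S r
        · rw [if_pos hp]; exact (emap_spec hnn hp).1
        · rw [if_neg hp, emap_of_not_mem hp]; exact Finset.mem_singleton_self p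
      · rw [Fintype.mem_piFinset]
        intro p
        show hmap z0 g S r p ∈ _
        by_cases hp : p ∈ Rset g S r
        · rw [if_pos hp, hmap, if_pos hp]; exact Finset.mem_singleton_self z0
        · rw [if_neg hp]; exact Finset.mem_univ _
  · intro g hg g' hg' heq
    simp only [Finset.coe_filter, Set.mem_setOf_eq, Finset.mem_univ, true_and] at hg hg'
    have hnn : r ≤ (S.filter (fun p => ¬ nov g S p)).card := by
      have hsplit := Finset.card_filter_add_card_filter_not
        (s := S) (p := fun p => nov g S p)
      have himg := card_image_eq_card_nov g S
      omega
    have hnn' : r ≤ (S.filter (fun p => ¬ nov g' S p)).card := by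
      have hsplit := Finset.card_filter_add_card_filter_not
        (s := S) (p := fun p => nov g' S p)
      have himg := card_image_eq_card_nov g' S
      omega
    simp only [Sigma.mk.inj_iff, Prod.mk.injEq, heq_eq_eq] at heq
    exact recon hnn hnn' heq.1 heq.2.1 heq.2.2

end key
section glue

variable {m d s : ℕ}

def EE (m d s : ℕ) : (Fin m → Fin d → Fin s) ≃ (Fin (m * d) → Fin s) :=
  (Equiv.curry (Fin m) (Fin d) (Fin s)).symm.trans
    (Equiv.arrowCongr finProdFinEquiv (Equiv.refl (Fin s)))

lemma EE_image (f : Fin m → Fin d → Fin s) (A : Finset (Fin m)) :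
    ((A ×ˢ (Finset.univ : Finset (Fin d))).image finProdFinEquiv).image (EE m d s f)
      = nbrs f A := by
  rw [Finset.image_image]
  have h1 : (EE m d s f) ∘ finProdFinEquiv = fun p : Fin m × Fin d => f p.1 p.2 := by
    funext p
    simp [EE, Equiv.arrowCongr, Equiv.curry, Function.uncurry]
  rw [h1]
  ext y
  simp only [Finset.mem_image, Finset.mem_product, Finset.mem_univ, and_true, nbrs, nbr,
    Finset.mem_biUnion, Finset.mem_image]
  constructor
  · rintro ⟨⟨v, i⟩, hv, hy⟩; exact ⟨v, hv, i, trivial, hy⟩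
  · rintro ⟨v, hv, i, -, hy⟩; exact ⟨(v, i), hv, hy⟩

lemma Scard (A : Finset (Fin m)) :
    ((A ×ˢ (Finset.univ : Finset (Fin d))).image (finProdFinEquiv (m := m) (n := d))).card
      = A.card * d := by
  rw [Finset.card_image_of_injective _ (finProdFinEquiv.injective), Finset.card_product,
    Finset.card_univ, Fintype.card_fin]

lemma badA_count (hs : 0 < s) (A : Finset (Fin m)) (r : ℕ) (hr : r ≤ A.card * d) :
    ((Finset.univ : Finset (Fin m → Fin d → Fin s)).filter
        (fun f => (nbrs f A).card ≤ A.card * d - r)).card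
      ≤ (A.card * d).choose r * ((A.card * d) ^ r * s ^ (m * d - r)) := by
  classical
  set S := (A ×ˢ (Finset.univ : Finset (Fin d))).image (finProdFinEquiv (m := m) (n := d))
    with hS
  have hScard : S.card = A.card * d := Scard A
  have hcount : ((Finset.univ : Finset (Fin m → Fin d → Fin s)).filter
        (fun f => (nbrs f A).card ≤ A.card * d - r)).card
      = ((Finset.univ : Finset (Fin (m * d) → Fin s)).filter
        (fun g => (S.image g).card ≤ S.card - r)).card := by
    apply Finset.card_bij' (fun f _ => EE m d s f) (fun g _ => (EE m d s).symm g)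
    · intro f hf
      rw [Finset.mem_filter] at hf ⊢
      refine ⟨Finset.mem_univ _, ?_⟩
      rw [hS, EE_image f A, hScard]
      exact hf.2
    · intro g hg
      rw [Finset.mem_filter] at hg ⊢
      refine ⟨Finset.mem_univ _, ?_⟩
      have := EE_image ((EE m d s).symm g) A
      rw [Equiv.apply_symm_apply] at this
      rw [← this, ← hS, ← hScard]
      exact hg.2
    · intro f _; exact Equiv.symm_apply_apply _ _
    · intro g _; exact Equiv.apply_symm_apply _ _
  rw [hcount, ← hScard]
  exact key_count hs S r (hScard ▸ hr)

end glue


lemma aux_pow (k : ℕ) (hk : 0 < k) : ((k : ℝ) + 1) ^ k ≤ 3 * (k : ℝ) ^ k := by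
  have hk' : (0:ℝ) < k := Nat.cast_pos.mpr hk
  have h1 : (k:ℝ) + 1 = (1 + 1/k) * k := by field_simp
  rw [h1, mul_pow]
  have h2 : (1 + 1/(k:ℝ))^k ≤ 3 := by
    have hexp := Real.add_one_le_exp (1/(k:ℝ))
    calc (1 + 1/(k:ℝ))^k ≤ (Real.exp (1/k))^k := by
          apply pow_le_pow_left₀ (by positivity) (by linarith)
      _ = Real.exp 1 := by
          rw [← Real.exp_nat_mul]
          congr 1
          field_simp
      _ ≤ 3 := by have := Real.exp_one_lt_d9; linarith
  exact mul_le_mul_of_nonneg_right h2 (pow_nonneg hk'.le k)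

lemma fact_lb (r : ℕ) : ((r:ℝ)/3)^r ≤ (r.factorial : ℝ) := by
  induction r with
  | zero => simp
  | succ k ih =>
    rcases Nat.eq_zero_or_pos k with hk | hk
    · subst hk; norm_num [Nat.factorial]
    · have hk' : (0:ℝ) < k := Nat.cast_pos.mpr hk
      have key : (((k:ℝ)+1)/3)^(k+1) ≤ ((k:ℝ)+1) * ((k:ℝ)/3)^k := by
        calc (((k:ℝ)+1)/3)^(k+1) = (((k:ℝ)+1)/3) * (((k:ℝ)+1)^k/3^k) := by
              rw [pow_succ, div_pow]; ring
          _ ≤ (((k:ℝ)+1)/3) * ((3*(k:ℝ)^k)/3^k) := by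
              gcongr
              exact aux_pow k hk
          _ = ((k:ℝ)+1) * ((k:ℝ)/3)^k := by
              rw [div_pow]; field_simp
      have hgoal : ((((k:ℝ))+1)/3)^(k+1) ≤ ((k:ℝ)+1) * (k.factorial : ℝ) :=
        key.trans (mul_le_mul_of_nonneg_left ih (by positivity))
      push_cast [Nat.factorial_succ]
      exact hgoal

lemma geom_bound (n : ℕ) : ∑ a ∈ Finset.Icc 1 n, (3/25:ℝ)^a ≤ 3/22 := by
  have h1 : ∑ a ∈ Finset.Icc 1 n, (3/25:ℝ)^a = (3/25) * ∑ i ∈ Finset.range n, (3/25:ℝ)^i := by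
    rw [Finset.mul_sum]
    rw [← Finset.Ico_add_one_right_eq_Icc, Finset.sum_Ico_eq_sum_range, Nat.add_sub_cancel]
    apply Finset.sum_congr rfl fun i _ => ?_
    rw [add_comm, pow_succ]
    ring
  rw [h1]
  have h2 : ∑ i ∈ Finset.range n, (3/25:ℝ)^i ≤ 25/22 := by
    have := geom_sum_eq (by norm_num : (3/25:ℝ) ≠ 1) n
    rw [this]
    have hp : (0:ℝ) ≤ (3/25:ℝ)^n := by positivity
    rw [div_le_iff_of_neg (by norm_num : (3/25:ℝ) - 1 < 0)]
    nlinarith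
  nlinarith


set_option maxHeartbeats 2000000 in
theorem stmt_4 (ε : ℝ) (hε0 : 0 < ε) (hε1 : ε < 1) (m n : ℕ) (hm : 2 ≤ m) (hn : 1 ≤ n)
    (d s : ℕ) (hd : d = ⌈Real.logb 2 m / ε⌉₊)
    (hs : s = ⌈100 * n * Real.logb 2 m / ε ^ 2⌉₊) :
    ((s : ℝ) ^ (m * d)) / 2
      < (({f : Fin m → Fin d → Fin s | IsExpander f n ε}).ncard : ℝ) := by
  classical
  set L := Real.logb 2 m with hL
  have hmR : (2:ℝ) ≤ (m:ℝ) := by exact_mod_cast hm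
  have hmpos : (0:ℝ) < m := by linarith
  have hL1 : 1 ≤ L := by
    rw [hL, Real.le_logb_iff_rpow_le (by norm_num) hmpos, Real.rpow_one]
    exact hmR
  have hL0 : (0:ℝ) < L := by linarith
  -- facts about d
  have hdlb : L / ε ≤ (d:ℝ) := by rw [hd]; exact Nat.le_ceil _
  have hεd : L ≤ ε * d := by rw [div_le_iff₀ hε0] at hdlb; linarith
  have hd1 : 1 ≤ d := by
    rw [hd]
    exact Nat.one_le_iff_ne_zero.mpr (Nat.pos_iff_ne_zero.mp
      (Nat.ceil_pos.mpr (by positivity)))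
  have hdR1 : (1:ℝ) ≤ d := by exact_mod_cast hd1
  have hdub : (d:ℝ) < L / ε + 1 := by rw [hd]; exact Nat.ceil_lt_add_one (by positivity)
  have hd2 : (d:ℝ) ≤ 2 * L / ε := by
    have h1 : (1:ℝ) ≤ L / ε := by
      rw [le_div_iff₀ hε0]; nlinarith
    have : L / ε + 1 ≤ 2 * L / ε := by
      have : 2 * L / ε = L / ε + L / ε := by ring
      linarith
    linarith
  -- facts about s
  have hs1 : 1 ≤ s := by
    rw [hs]
    exact Nat.one_le_iff_ne_zero.mpr (Nat.pos_iff_ne_zero.mp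
      (Nat.ceil_pos.mpr (by positivity)))
  have hs0 : 0 < s := hs1
  have hsR : (1:ℝ) ≤ (s:ℝ) := by exact_mod_cast hs1
  have hslb : 100 * n * L / ε ^ 2 ≤ (s:ℝ) := by rw [hs]; exact Nat.le_ceil _
  have hnR : (1:ℝ) ≤ (n:ℝ) := by exact_mod_cast hn
  -- repeats threshold
  set r : ℕ → ℕ := fun a => ⌊ε * ((a * d : ℕ) : ℝ)⌋₊ + 1 with hrdef
  have hr_gt : ∀ a : ℕ, ε * ((a * d : ℕ) : ℝ) < r a := by
    intro a
    have := Nat.lt_floor_add_one (ε * ((a * d : ℕ) : ℝ))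
    rw [hrdef]
    push_cast
    push_cast at this
    linarith
  have hr_le : ∀ a : ℕ, (r a : ℝ) ≤ ε * ((a * d : ℕ) : ℝ) + 1 := by
    intro a
    have := Nat.floor_le (by positivity : (0:ℝ) ≤ ε * ((a * d : ℕ) : ℝ))
    rw [hrdef]
    push_cast
    push_cast at this
    linarith
  have hrN : ∀ a : ℕ, 1 ≤ a → r a ≤ a * d := by
    intro a ha
    have had : 1 ≤ a * d := by
      have := Nat.mul_le_mul ha hd1
      omega
    have h1 : ⌊ε * ((a * d : ℕ) : ℝ)⌋₊ < a * d := by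
      rw [Nat.floor_lt (by positivity)]
      have h2 : (1:ℝ) ≤ ((a*d : ℕ):ℝ) := by exact_mod_cast had
      nlinarith [h2]
    have hreq : r a = ⌊ε * ((a * d : ℕ) : ℝ)⌋₊ + 1 := rfl
    omega
  -- Good and Bad sets
  set Good : Finset (Fin m → Fin d → Fin s) :=
    Finset.univ.filter (fun f => IsExpander f n ε) with hGood
  set Bad : Finset (Fin m → Fin d → Fin s) :=
    Finset.univ.filter (fun f => ¬ IsExpander f n ε) with hBad
  -- the union bound target
  set Tgt : Finset (Fin m → Fin d → Fin s) :=
    (Finset.Icc 1 n).biUnion (fun a => ((Finset.univ : Finset (Fin m)).powersetCard a).biUnion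
      (fun A => Finset.univ.filter (fun f => (nbrs f A).card ≤ a * d - r a))) with hTgt
  have hsubset : Bad ⊆ Tgt := by
    intro f hf
    rw [hBad, Finset.mem_filter] at hf
    have hnex := hf.2
    rw [IsExpander] at hnex
    push_neg at hnex
    obtain ⟨A, hAn, hAlt⟩ := hnex
    have ha1 : 1 ≤ A.card := by
      rcases Nat.eq_zero_or_pos A.card with h0 | h
      · rw [h0] at hAlt
        push_cast at hAlt
        have hc : (0:ℝ) ≤ ((nbrs f A).card : ℝ) := Nat.cast_nonneg _
        nlinarith [hAlt, hc]
      · exact h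
    rw [hTgt, Finset.mem_biUnion]
    refine ⟨A.card, Finset.mem_Icc.mpr ⟨ha1, hAn⟩, ?_⟩
    rw [Finset.mem_biUnion]
    refine ⟨A, Finset.mem_powersetCard_univ.mpr rfl, ?_⟩
    rw [Finset.mem_filter]
    refine ⟨Finset.mem_univ _, ?_⟩
    -- real inequality to nat inequality
    have h2 := hr_le A.card
    have h5 : (((nbrs f A).card + r A.card : ℕ) : ℝ) < ((A.card * d + 1 : ℕ) : ℝ) := by
      push_cast
      push_cast at h2 hAlt
      nlinarith [h2, hAlt]
    have h6 : (nbrs f A).card + r A.card < A.card * d + 1 := by exact_mod_cast h5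
    omega
  -- counting: union bound
  have hcard1 : Bad.card ≤ ∑ a ∈ Finset.Icc 1 n, (m.choose a) *
      ((a*d).choose (r a) * ((a*d)^(r a) * s^(m*d - r a))) := by
    calc Bad.card ≤ Tgt.card := Finset.card_le_card hsubset
      _ ≤ ∑ a ∈ Finset.Icc 1 n, (((Finset.univ : Finset (Fin m)).powersetCard a).biUnion
            (fun A => Finset.univ.filter (fun f => (nbrs f A).card ≤ a * d - r a))).card :=
          Finset.card_biUnion_le
      _ ≤ ∑ a ∈ Finset.Icc 1 n, ∑ A ∈ (Finset.univ : Finset (Fin m)).powersetCard a,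
            (Finset.univ.filter (fun f => (nbrs f A).card ≤ a * d - r a)).card :=
          Finset.sum_le_sum (fun a _ => Finset.card_biUnion_le)
      _ ≤ ∑ a ∈ Finset.Icc 1 n, ∑ A ∈ (Finset.univ : Finset (Fin m)).powersetCard a,
            ((a*d).choose (r a) * ((a*d)^(r a) * s^(m*d - r a))) := by
          apply Finset.sum_le_sum
          intro a ha
          apply Finset.sum_le_sum
          intro A hA
          have hAcard : A.card = a := Finset.mem_powersetCard_univ.mp hA
          have ha1 : 1 ≤ a := (Finset.mem_Icc.mp ha).1
          have hb := badA_count (m := m) (d := d) hs0 A (r a)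
            (by rw [hAcard]; exact hrN a ha1)
          rw [hAcard] at hb
          exact hb
      _ = ∑ a ∈ Finset.Icc 1 n, (m.choose a) *
            ((a*d).choose (r a) * ((a*d)^(r a) * s^(m*d - r a))) := by
          apply Finset.sum_congr rfl
          intro a _
          rw [Finset.sum_const, Finset.card_powersetCard, Finset.card_univ,
            Fintype.card_fin, smul_eq_mul]
  -- per-a real bound
  have hterm : ∀ a ∈ Finset.Icc 1 n,
      ((m.choose a * ((a*d).choose (r a) * ((a*d)^(r a) * s^(m*d - r a))) : ℕ) : ℝ)
        ≤ (3/25:ℝ)^a * (s:ℝ)^(m*d) := by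
    intro a ha
    obtain ⟨ha1, han⟩ := Finset.mem_Icc.mp ha
    by_cases ham : a ≤ m
    swap
    · have hz : m.choose a = 0 := Nat.choose_eq_zero_of_lt (by omega)
      simp only [hz, Nat.zero_mul, Nat.cast_zero]
      positivity
    obtain ⟨N, hNdef⟩ : ∃ N, N = a * d := ⟨a * d, rfl⟩
    obtain ⟨R, hRdef⟩ : ∃ R, R = r a := ⟨r a, rfl⟩
    rw [← hNdef, ← hRdef]
    have hRN : R ≤ N := by rw [hNdef, hRdef]; exact hrN a ha1
    have hNmd : N ≤ m * d := by rw [hNdef]; exact Nat.mul_le_mul_right d ham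
    have hRmd : R ≤ m * d := hRN.trans hNmd
    have hN1 : 1 ≤ N := by
      rw [hNdef]
      have := Nat.mul_le_mul ha1 hd1
      omega
    have hNR1 : (1:ℝ) ≤ (N:ℝ) := by exact_mod_cast hN1
    have hR1 : 1 ≤ R := by
      have hre : r a = ⌊ε * ((a * d : ℕ) : ℝ)⌋₊ + 1 := rfl
      omega
    have hRR1 : (1:ℝ) ≤ (R:ℝ) := by exact_mod_cast hR1
    have hεNR : ε * (N:ℝ) < (R:ℝ) := by
      rw [hNdef, hRdef]; exact hr_gt a
    have hcN : (N:ℝ) = (a:ℝ) * (d:ℝ) := by rw [hNdef]; push_cast; ring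
    have haR : (a:ℝ) < (R:ℝ) := by
      have p1 : (0:ℝ) ≤ (a:ℝ) * (L - 1) := mul_nonneg (by positivity) (by linarith)
      have p2 : (0:ℝ) ≤ (a:ℝ) * (ε * (d:ℝ) - L) := mul_nonneg (by positivity) (by linarith)
      nlinarith [hεNR, hcN]
    have haRn : a ≤ R := by exact_mod_cast haR.le
    have hNub : (N:ℝ) ≤ 2 * (n:ℝ) * L / ε := by
      have h1 : (a:ℝ) * (d:ℝ) ≤ (n:ℝ) * (2 * L / ε) :=
        mul_le_mul (by exact_mod_cast han) hd2 (by positivity) (by positivity)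
      have h2 : (n:ℝ) * (2 * L / ε) = 2 * (n:ℝ) * L / ε := by ring
      rw [hcN]
      linarith
    have hεs : 100 * (n:ℝ) * L / ε ≤ ε * (s:ℝ) := by
      have h1 : 100 * (n:ℝ) * L / ε = ε * (100 * (n:ℝ) * L / ε ^ 2) := by
        field_simp
      rw [h1]
      exact mul_le_mul_of_nonneg_left hslb hε0.le
    have hNs : 50 * (N:ℝ) ≤ ε * (s:ℝ) := by
      have he : (2 * (n:ℝ) * L / ε) * 50 = 100 * (n:ℝ) * L / ε := by ring
      linarith
    have hspos : (0:ℝ) < (s:ℝ) := by linarith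
    have hbase : 3 * (N:ℝ) * (N:ℝ) / ((R:ℝ) * (s:ℝ)) ≤ 3 / 50 := by
      rw [div_le_div_iff₀ (by positivity) (by norm_num)]
      have h6 : (ε * (N:ℝ)) * (50 * (N:ℝ)) ≤ (R:ℝ) * (ε * (s:ℝ)) :=
        mul_le_mul hεNR.le hNs (by positivity) (by positivity)
      have e1 : (ε * (N:ℝ)) * (50 * (N:ℝ)) = ε * (50 * (N:ℝ) * (N:ℝ)) := by ring
      have e2 : (R:ℝ) * (ε * (s:ℝ)) = ε * ((R:ℝ) * (s:ℝ)) := by ring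
      have h7 : ε * (50 * (N:ℝ) * (N:ℝ)) ≤ ε * ((R:ℝ) * (s:ℝ)) := by
        rw [← e1, ← e2]; exact h6
      have h8 : 50 * (N:ℝ) * (N:ℝ) ≤ (R:ℝ) * (s:ℝ) := le_of_mul_le_mul_left h7 hε0
      linarith
    have hchoose : ((N.choose R : ℕ) : ℝ) ≤ (N:ℝ)^R / (((R:ℝ)/3)^R) := by
      refine (Nat.choose_le_pow_div R N).trans ?_
      have hfact : ((R:ℝ)/3)^R ≤ (R.factorial : ℝ) := fact_lb R
      have hp1 : (0:ℝ) < ((R:ℝ)/3)^R := by positivity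
      exact div_le_div_of_nonneg_left (by positivity) hp1 hfact
    have hpowsub : ((s:ℝ))^(m*d - R) = (s:ℝ)^(m*d) / (s:ℝ)^R := by
      rw [eq_div_iff (by positivity), ← pow_add, Nat.sub_add_cancel hRmd]
    have hRne : ((R:ℝ)) ≠ 0 := by linarith
    have hsne : ((s:ℝ)) ≠ 0 := by linarith
    have hmain : ((N.choose R * (N^R * s^(m*d - R)) : ℕ) : ℝ)
        ≤ (3/50:ℝ)^R * (s:ℝ)^(m*d) := by
      push_cast
      calc ((N.choose R : ℕ):ℝ) * ((N:ℝ)^R * (s:ℝ)^(m*d - R))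
          ≤ ((N:ℝ)^R / (((R:ℝ)/3)^R)) * ((N:ℝ)^R * (s:ℝ)^(m*d - R)) :=
            mul_le_mul_of_nonneg_right hchoose (by positivity)
        _ = (3 * (N:ℝ) * (N:ℝ) / ((R:ℝ) * (s:ℝ)))^R * (s:ℝ)^(m*d) := by
            rw [hpowsub, div_pow, div_pow]
            field_simp
            ring
        _ ≤ (3/50:ℝ)^R * (s:ℝ)^(m*d) := by
            refine mul_le_mul_of_nonneg_right ?_ (by positivity)
            exact pow_le_pow_left₀ (by positivity) hbase R
    have hm2R : ((m.choose a : ℕ) : ℝ) ≤ (2:ℝ)^R := by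
      have h1 : ((m.choose a : ℕ):ℝ) ≤ ((m:ℝ))^a := by
        exact_mod_cast Nat.choose_le_pow m a
      have h2 : (m:ℝ) = (2:ℝ) ^ L := by
        rw [hL]
        exact (Real.rpow_logb (by norm_num) (by norm_num) hmpos).symm
      have h3 : ((m:ℝ))^a = (2:ℝ) ^ (L * (a:ℝ)) := by
        rw [h2, ← Real.rpow_natCast ((2:ℝ) ^ L) a, ← Real.rpow_mul (by norm_num)]
      have hLaR : L * (a:ℝ) ≤ (R:ℝ) := by
        have p2 : (0:ℝ) ≤ (a:ℝ) * (ε * (d:ℝ) - L) := mul_nonneg (by positivity)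
          (by linarith)
        nlinarith [hεNR, hcN]
      have h4 : (2:ℝ) ^ (L * (a:ℝ)) ≤ (2:ℝ) ^ ((R:ℝ)) :=
        Real.rpow_le_rpow_of_exponent_le (by norm_num) hLaR
      have h5 : (2:ℝ) ^ ((R:ℝ)) = (2:ℝ)^R := Real.rpow_natCast 2 R
      rw [h3] at h1
      rw [← h5]
      linarith
    calc ((m.choose a * (N.choose R * (N^R * s^(m*d - R))) : ℕ) : ℝ)
        = ((m.choose a : ℕ):ℝ) * ((N.choose R * (N^R * s^(m*d - R)) : ℕ):ℝ) := by
          push_cast; ring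
      _ ≤ (2:ℝ)^R * ((3/50:ℝ)^R * (s:ℝ)^(m*d)) :=
          mul_le_mul hm2R hmain (by positivity) (by positivity)
      _ = (2 * (3/50) : ℝ)^R * (s:ℝ)^(m*d) := by
          rw [← mul_assoc, ← mul_pow]
      _ = (3/25:ℝ)^R * (s:ℝ)^(m*d) := by norm_num
      _ ≤ (3/25:ℝ)^a * (s:ℝ)^(m*d) := by
          refine mul_le_mul_of_nonneg_right ?_ (by positivity)
          exact pow_le_pow_of_le_one (by norm_num) (by norm_num) haRn
  -- put it together
  have hBadR : (Bad.card : ℝ) ≤ (3/22) * (s:ℝ)^(m*d) := by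
    have h1 : (Bad.card : ℝ) ≤ ∑ a ∈ Finset.Icc 1 n,
        ((m.choose a * ((a*d).choose (r a) * ((a*d)^(r a) * s^(m*d - r a))) : ℕ) : ℝ) := by
      rw [← Nat.cast_sum]
      exact_mod_cast hcard1
    have h2 : ∑ a ∈ Finset.Icc 1 n,
        ((m.choose a * ((a*d).choose (r a) * ((a*d)^(r a) * s^(m*d - r a))) : ℕ) : ℝ)
        ≤ ∑ a ∈ Finset.Icc 1 n, (3/25:ℝ)^a * (s:ℝ)^(m*d) :=
      Finset.sum_le_sum hterm
    have h3 : ∑ a ∈ Finset.Icc 1 n, (3/25:ℝ)^a * (s:ℝ)^(m*d)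
        = (∑ a ∈ Finset.Icc 1 n, (3/25:ℝ)^a) * (s:ℝ)^(m*d) := by
      rw [Finset.sum_mul]
    have h4 : (∑ a ∈ Finset.Icc 1 n, (3/25:ℝ)^a) * (s:ℝ)^(m*d)
        ≤ (3/22) * (s:ℝ)^(m*d) :=
      mul_le_mul_of_nonneg_right (geom_bound n) (by positivity)
    linarith
  have hsplitcard : Good.card + Bad.card = s^(m*d) := by
    have h := Finset.card_filter_add_card_filter_not
      (s := (Finset.univ : Finset (Fin m → Fin d → Fin s)))
      (p := fun f => IsExpander f n ε)
    rw [Finset.card_univ] at h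
    have hF : Fintype.card (Fin m → Fin d → Fin s) = s^(m*d) := by
      rw [Fintype.card_fun, Fintype.card_fun, Fintype.card_fin, Fintype.card_fin,
        Fintype.card_fin, mul_comm m d, pow_mul]
    rw [hF] at h
    exact h
  have hsetq : {f : Fin m → Fin d → Fin s | IsExpander f n ε} = ↑Good := by
    rw [hGood]
    ext f
    simp
  rw [hsetq, Set.ncard_coe_finset]
  have hGoodR : (Good.card : ℝ) = (s:ℝ)^(m*d) - (Bad.card : ℝ) := by
    have h2 : ((Good.card + Bad.card : ℕ) : ℝ) = ((s^(m*d) : ℕ) : ℝ) := by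
      exact_mod_cast congrArg (fun x : ℕ => (x : ℝ)) hsplitcard
    push_cast at h2
    linarith
  have hp : (0:ℝ) < (s:ℝ)^(m*d) := by
    have : (0:ℝ) < (s:ℝ) := by
      have : (1:ℝ) ≤ (s:ℝ) := by exact_mod_cast hs1
      linarith
    positivity
  linarith
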